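/- Fix n, tr ∈ ℕ and a renewal process S with return-time law K^{tr} supported on {1,…,tr}. For β̄ = (β₀,…,β_{n−1}) ∈ [0,∞)^n and x̄ ∈ ℝ^n set k(β̄, x̄) := E_{K^{tr}}[ ∏_{k ∈ J_n} e^{β_k x_k}/M(β_k) ], where J_n = {0 ≤ k < n : S_k = 0} (with 0 ∈ J_n). Then the function f(β̄) := ∫ k(β̄,x̄) log k(β̄,x̄) dμ₀^{⊗n}(x̄) is non-decreasing in each coordinate β_j on [0,∞)^n. -/

import Mathlib

open MeasureTheory Filter Real Set
open scoped ENNReal NNReal Topology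

/-- moment generating function -/
noncomputable def Mg (μ : Measure ℝ) (β : ℝ) : ℝ := ∫ y, Real.exp (β * y) ∂μ

/-- tilted density -/
noncomputable def qf (μ : Measure ℝ) (β : ℝ) (y : ℝ) : ℝ := Real.exp (β * y) / Mg μ β

section PiProd

variable {μ : Measure ℝ} [IsProbabilityMeasure μ]

theorem integrable_pi_prod : ∀ {m : ℕ} {f : Fin m → ℝ → ℝ}, (∀ i, Integrable (f i) μ) →
    Integrable (fun x : Fin m → ℝ => ∏ i, f i (x i)) (Measure.pi fun _ => μ) := by
  intro m
  induction m with
  | zero =>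
      intro f _
      have : (fun x : Fin 0 → ℝ => ∏ i, f i (x i)) = fun _ => 1 := by
        funext x; simp
      rw [this]
      exact integrable_const _
  | succ m ih =>
      intro f hf
      have h := (measurePreserving_piFinSuccAbove (fun _ : Fin (m + 1) => μ) 0).symm
      rw [← h.integrable_comp_emb (MeasurableEquiv.measurableEmbedding _)]
      simp_rw [MeasurableEquiv.piFinSuccAbove_symm_apply, Fin.insertNthEquiv,
        Fin.prod_univ_succ, Fin.insertNth_zero]
      simp only [Fin.zero_succAbove, cast_eq, Function.comp_def, Fin.cons_zero, Fin.cons_succ,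
        Equiv.coe_fn_mk]
      exact Integrable.mul_prod (hf 0) (ih fun i => hf _)

theorem integral_pi_prod : ∀ {m : ℕ} (f : Fin m → ℝ → ℝ),
    ∫ x : Fin m → ℝ, ∏ i, f i (x i) ∂(Measure.pi fun _ => μ) = ∏ i, ∫ y, f i y ∂μ := by
  intro m
  induction m with
  | zero =>
      intro f
      simp
  | succ m ih =>
      intro f
      calc
        _ = ∫ z : ℝ × (Fin m → ℝ), f 0 z.1 * ∏ i : Fin m, f i.succ (z.2 i)
            ∂((μ).prod (Measure.pi fun _ => μ)) := by
          rw [← ((measurePreserving_piFinSuccAbove (fun _ : Fin (m + 1) => μ) 0).symm).integral_comp']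
          congr 1
          funext z
          simp [MeasurableEquiv.piFinSuccAbove_symm_apply, Fin.prod_univ_succ,
            Fin.insertNthEquiv, Fin.insertNth_zero, Fin.zero_succAbove]
        _ = (∫ y, f 0 y ∂μ) * ∏ i : Fin m, ∫ y, f i.succ y ∂μ := by
          rw [← ih, ← integral_prod_mul]
        _ = ∏ i, ∫ y, f i y ∂μ := by rw [Fin.prod_univ_succ]

end PiProd


noncomputable def Eb (a u : ℝ) : ℝ := Real.exp (a * u) + Real.exp (-(a * u))

lemma Eb_pos (a u : ℝ) : 0 < Eb a u := by
  unfold Eb; positivity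

lemma one_le_Eb (a u : ℝ) : 1 ≤ Eb a u := by
  unfold Eb
  rcases le_total 0 (a * u) with h | h
  · have := Real.one_le_exp h
    have := (Real.exp_pos (-(a * u))).le
    linarith
  · have : 1 ≤ Real.exp (-(a * u)) := Real.one_le_exp (by linarith)
    have := (Real.exp_pos (a * u)).le
    linarith

lemma exp_le_Eb {β a : ℝ} (h : |β| ≤ a) (u : ℝ) : Real.exp (β * u) ≤ Eb a u := by
  have hβ1 : β ≤ a := le_trans (le_abs_self β) h
  have hβ2 : -a ≤ β := neg_le_of_abs_le h
  unfold Eb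
  rcases le_total 0 u with hu | hu
  · have : β * u ≤ a * u := mul_le_mul_of_nonneg_right hβ1 hu
    have := Real.exp_le_exp.2 this
    have := (Real.exp_pos (-(a * u))).le
    linarith
  · have : β * u ≤ -(a * u) := by nlinarith
    have := Real.exp_le_exp.2 this
    have := (Real.exp_pos (a * u)).le
    linarith

lemma Eb_mul_Eb {a a' : ℝ} (ha : 0 ≤ a) (ha' : 0 ≤ a') (u : ℝ) :
    Eb a u * Eb a' u ≤ 4 * Eb (a + a') u := by
  have e1 : Real.exp (a * u) * Real.exp (a' * u) = Real.exp ((a + a') * u) := by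
    rw [← Real.exp_add]; ring_nf
  have e2 : Real.exp (a * u) * Real.exp (-(a' * u)) = Real.exp ((a - a') * u) := by
    rw [← Real.exp_add]; ring_nf
  have e3 : Real.exp (-(a * u)) * Real.exp (a' * u) = Real.exp ((a' - a) * u) := by
    rw [← Real.exp_add]; ring_nf
  have e4 : Real.exp (-(a * u)) * Real.exp (-(a' * u)) = Real.exp ((-(a + a')) * u) := by
    rw [← Real.exp_add]; ring_nf
  have b1 : Real.exp ((a + a') * u) ≤ Eb (a + a') u :=
    exp_le_Eb (by rw [abs_of_nonneg (by linarith)]) u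
  have b2 : Real.exp ((a - a') * u) ≤ Eb (a + a') u :=
    exp_le_Eb (by rw [abs_le]; constructor <;> linarith) u
  have b3 : Real.exp ((a' - a) * u) ≤ Eb (a + a') u :=
    exp_le_Eb (by rw [abs_le]; constructor <;> linarith) u
  have b4 : Real.exp ((-(a + a')) * u) ≤ Eb (a + a') u :=
    exp_le_Eb (by rw [abs_neg, abs_of_nonneg (by linarith)]) u
  have : Eb a u * Eb a' u = Real.exp ((a + a') * u) + Real.exp ((a - a') * u)
      + Real.exp ((a' - a) * u) + Real.exp ((-(a + a')) * u) := by
    unfold Eb; rw [← e1, ← e2, ← e3, ← e4]; ring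
  linarith

lemma Eb_le {a a' : ℝ} (ha : 0 ≤ a) (haa : a ≤ a') (u : ℝ) : Eb a u ≤ 2 * Eb a' u := by
  have b1 : Real.exp (a * u) ≤ Eb a' u := exp_le_Eb (by rwa [abs_of_nonneg ha]) u
  have b2 : Real.exp ((-a) * u) ≤ Eb a' u := exp_le_Eb (by rwa [abs_neg, abs_of_nonneg ha]) u
  have h3 : Real.exp ((-a) * u) = Real.exp (-(a * u)) := by ring_nf
  rw [h3] at b2
  unfold Eb at b1 b2 ⊢; linarith

lemma integrable_Eb {μ : Measure ℝ} (hM : ∀ lam : ℝ, Integrable (fun x => Real.exp (lam * x)) μ)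
    (a : ℝ) : Integrable (fun u => Eb a u) μ := by
  have h2 : Integrable (fun x => Real.exp ((-a) * x)) μ := hM (-a)
  have : (fun u => Eb a u) = fun u => Real.exp (a * u) + Real.exp ((-a) * u) := by
    funext u; unfold Eb; ring_nf
  rw [this]
  exact (hM a).add h2

/-- domination predicate -/
def Dom (m : ℕ) (f : (Fin m → ℝ) → ℝ) : Prop :=
  ∃ C a : ℝ, 0 ≤ C ∧ 0 ≤ a ∧ ∀ x, |f x| ≤ C * ∏ i, Eb a (x i)

namespace Dom

variable {m : ℕ} {f g : (Fin m → ℝ) → ℝ}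

lemma prod_Eb_pos (a : ℝ) (x : Fin m → ℝ) : 0 < ∏ i, Eb a (x i) :=
  Finset.prod_pos fun i _ => Eb_pos a (x i)

lemma one_le_prod_Eb' (a : ℝ) (x : Fin m → ℝ) (S : Finset (Fin m)) :
    1 ≤ ∏ i ∈ S, Eb a (x i) := by
  calc (1:ℝ) = ∏ _i ∈ S, (1:ℝ) := by simp
    _ ≤ ∏ i ∈ S, Eb a (x i) :=
        Finset.prod_le_prod (fun i _ => zero_le_one) (fun i _ => one_le_Eb a (x i))

lemma one_le_prod_Eb (a : ℝ) (x : Fin m → ℝ) : 1 ≤ ∏ i, Eb a (x i) :=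
  one_le_prod_Eb' a x Finset.univ

lemma single_le_prod_Eb (a : ℝ) (x : Fin m → ℝ) (i : Fin m) :
    Eb a (x i) ≤ ∏ k, Eb a (x k) := by
  rw [← Finset.mul_prod_erase Finset.univ (fun k => Eb a (x k)) (Finset.mem_univ i)]
  exact le_mul_of_one_le_right (Eb_pos a (x i)).le (one_le_prod_Eb' a x _)

lemma prod_Eb_le {a a' : ℝ} (ha : 0 ≤ a) (haa : a ≤ a') (x : Fin m → ℝ) :
    ∏ i, Eb a (x i) ≤ 2 ^ m * ∏ i, Eb a' (x i) := by
  calc ∏ i, Eb a (x i) ≤ ∏ i, 2 * Eb a' (x i) :=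
        Finset.prod_le_prod (fun i _ => (Eb_pos a (x i)).le) (fun i _ => Eb_le ha haa (x i))
    _ = 2 ^ m * ∏ i, Eb a' (x i) := by
        rw [Finset.prod_mul_distrib, Finset.prod_const]
        simp

lemma mono (h : ∀ x, |f x| ≤ g x) (hg : Dom m g) : Dom m f := by
  obtain ⟨C, a, hC, ha, hb⟩ := hg
  exact ⟨C, a, hC, ha, fun x => le_trans (h x) (le_trans (le_abs_self _) (hb x))⟩

lemma const (c : ℝ) : Dom m (fun _ => c) := by
  refine ⟨|c|, 0, abs_nonneg c, le_refl _, fun x => ?_⟩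
  exact le_mul_of_one_le_right (abs_nonneg c) (one_le_prod_Eb 0 x)

lemma add (hf : Dom m f) (hg : Dom m g) : Dom m (fun x => f x + g x) := by
  obtain ⟨C, a, hC, ha, hb⟩ := hf
  obtain ⟨C', a', hC', ha', hb'⟩ := hg
  refine ⟨2 ^ m * (C + C'), a + a', by positivity, by linarith, fun x => ?_⟩
  have h1 : |f x + g x| ≤ C * ∏ i, Eb a (x i) + C' * ∏ i, Eb a' (x i) :=
    le_trans (abs_add_le _ _) (add_le_add (hb x) (hb' x))
  have h2 : ∏ i, Eb a (x i) ≤ 2 ^ m * ∏ i, Eb (a + a') (x i) :=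
    prod_Eb_le ha (by linarith) x
  have h3 : ∏ i, Eb a' (x i) ≤ 2 ^ m * ∏ i, Eb (a + a') (x i) :=
    prod_Eb_le ha' (by linarith) x
  have h4 := (prod_Eb_pos (a + a') x).le
  nlinarith [mul_le_mul_of_nonneg_left h2 hC, mul_le_mul_of_nonneg_left h3 hC']

lemma neg (hf : Dom m f) : Dom m (fun x => -f x) := by
  obtain ⟨C, a, hC, ha, hb⟩ := hf
  exact ⟨C, a, hC, ha, fun x => by rw [abs_neg]; exact hb x⟩

lemma sub (hf : Dom m f) (hg : Dom m g) : Dom m (fun x => f x - g x) := by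
  simpa [sub_eq_add_neg] using hf.add hg.neg

lemma mul (hf : Dom m f) (hg : Dom m g) : Dom m (fun x => f x * g x) := by
  obtain ⟨C, a, hC, ha, hb⟩ := hf
  obtain ⟨C', a', hC', ha', hb'⟩ := hg
  refine ⟨4 ^ m * (C * C'), a + a', by positivity, by linarith, fun x => ?_⟩
  have h1 : |f x * g x| ≤ (C * ∏ i, Eb a (x i)) * (C' * ∏ i, Eb a' (x i)) := by
    rw [abs_mul]
    exact mul_le_mul (hb x) (hb' x) (abs_nonneg _)
      (mul_nonneg hC (prod_Eb_pos a x).le)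
  have h2 : (∏ i, Eb a (x i)) * ∏ i, Eb a' (x i) ≤ 4 ^ m * ∏ i, Eb (a + a') (x i) := by
    calc (∏ i, Eb a (x i)) * ∏ i, Eb a' (x i) = ∏ i, Eb a (x i) * Eb a' (x i) := by
          rw [Finset.prod_mul_distrib]
      _ ≤ ∏ i, 4 * Eb (a + a') (x i) :=
          Finset.prod_le_prod (fun i _ => mul_nonneg (Eb_pos _ _).le (Eb_pos _ _).le)
            (fun i _ => Eb_mul_Eb ha ha' (x i))
      _ = 4 ^ m * ∏ i, Eb (a + a') (x i) := by
          rw [Finset.prod_mul_distrib, Finset.prod_const]; simp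
  calc |f x * g x| ≤ (C * C') * ((∏ i, Eb a (x i)) * ∏ i, Eb a' (x i)) := by
        rw [show (C * ∏ i, Eb a (x i)) * (C' * ∏ i, Eb a' (x i))
            = (C * C') * ((∏ i, Eb a (x i)) * ∏ i, Eb a' (x i)) by ring] at h1
        exact h1
    _ ≤ (C * C') * (4 ^ m * ∏ i, Eb (a + a') (x i)) :=
        mul_le_mul_of_nonneg_left h2 (by positivity)
    _ = 4 ^ m * (C * C') * ∏ i, Eb (a + a') (x i) := by ring

lemma sum {ι : Type*} (S : Finset ι) (f : ι → (Fin m → ℝ) → ℝ)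
    (hf : ∀ s ∈ S, Dom m (f s)) : Dom m (fun x => ∑ s ∈ S, f s x) := by
  classical
  induction S using Finset.induction_on with
  | empty => simpa using const 0
  | @insert s S hs ih =>
      have := (hf s (Finset.mem_insert_self s S)).add
        (ih fun t ht => hf t (Finset.mem_insert_of_mem ht))
      simpa [Finset.sum_insert hs] using this

lemma finprod {ι : Type*} (S : Finset ι) (f : ι → (Fin m → ℝ) → ℝ)
    (hf : ∀ s ∈ S, Dom m (f s)) : Dom m (fun x => ∏ s ∈ S, f s x) := by
  classical
  induction S using Finset.induction_on with
  | empty => simpa using const 1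
  | @insert s S hs ih =>
      have := (hf s (Finset.mem_insert_self s S)).mul
        (ih fun t ht => hf t (Finset.mem_insert_of_mem ht))
      simpa [Finset.prod_insert hs] using this

lemma exp_coord (i : Fin m) (β : ℝ) : Dom m (fun x => Real.exp (β * x i)) := by
  refine ⟨1, |β|, zero_le_one, abs_nonneg β, fun x => ?_⟩
  rw [abs_of_pos (Real.exp_pos _), one_mul]
  calc Real.exp (β * x i) ≤ Eb |β| (x i) := exp_le_Eb (le_refl _) (x i)
    _ ≤ ∏ k, Eb |β| (x k) := single_le_prod_Eb _ x i

lemma abs_coord (i : Fin m) : Dom m (fun x => |x i|) := by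
  refine ⟨1, 1, zero_le_one, zero_le_one, fun x => ?_⟩
  rw [abs_abs, one_mul]
  have h1 : |x i| ≤ Eb 1 (x i) := by
    unfold Eb
    rcases le_total 0 (x i) with h | h
    · have := Real.add_one_le_exp (x i)
      have := (Real.exp_pos (-(1 * x i))).le
      rw [abs_of_nonneg h]
      have : x i ≤ Real.exp (1 * x i) := by
        rw [one_mul]; linarith [Real.add_one_le_exp (x i)]
      linarith [(Real.exp_pos (-(1 * x i))).le]
    · rw [abs_of_nonpos h]
      have : -x i ≤ Real.exp (-(1 * x i)) := by
        rw [one_mul]; linarith [Real.add_one_le_exp (-x i)]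
      linarith [(Real.exp_pos (1 * x i)).le]
  calc |x i| ≤ Eb 1 (x i) := h1
    _ ≤ ∏ k, Eb 1 (x k) := single_le_prod_Eb 1 x i

lemma integrable {μ : Measure ℝ} [IsProbabilityMeasure μ]
    (hM : ∀ lam : ℝ, Integrable (fun x => Real.exp (lam * x)) μ)
    (hf : Dom m f) (hmeas : AEStronglyMeasurable f (Measure.pi fun _ : Fin m => μ)) :
    Integrable f (Measure.pi fun _ : Fin m => μ) := by
  obtain ⟨C, a, hC, ha, hb⟩ := hf
  refine Integrable.mono' ((integrable_pi_prod fun _ => integrable_Eb hM a).const_mul C)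
    hmeas (ae_of_all _ fun x => ?_)
  simpa using hb x
end Dom



section Scalar

variable {μ : Measure ℝ} [IsProbabilityMeasure μ]

lemma Mg_pos (hM : ∀ lam : ℝ, Integrable (fun x => Real.exp (lam * x)) μ) (β : ℝ) : 0 < Mg μ β := by
  have : 0 < ∫ y, Real.exp (β * y) ∂μ := integral_exp_pos (hM β)
  exact this

lemma qf_pos (hM : ∀ lam : ℝ, Integrable (fun x => Real.exp (lam * x)) μ) (β y : ℝ) : 0 < qf μ β y :=
  div_pos (Real.exp_pos _) (Mg_pos hM β)

lemma qf_integrable (hM : ∀ lam : ℝ, Integrable (fun x => Real.exp (lam * x)) μ) (β : ℝ) : Integrable (fun y => qf μ β y) μ :=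
  (hM β).div_const _

lemma qf_integral_one (hM : ∀ lam : ℝ, Integrable (fun x => Real.exp (lam * x)) μ) (β : ℝ) : ∫ y, qf μ β y ∂μ = 1 := by
  unfold qf
  rw [integral_div]
  exact div_self (Mg_pos hM β).ne'

omit [IsProbabilityMeasure μ] in
lemma qf_continuous (β : ℝ) : Continuous (fun y => qf μ β y) := by
  unfold qf
  exact (Real.continuous_exp.comp (continuous_const.mul continuous_id)).div_const _

lemma log_qf (hM : ∀ lam : ℝ, Integrable (fun x => Real.exp (lam * x)) μ) (β y : ℝ) : Real.log (qf μ β y) = β * y - Real.log (Mg μ β) := by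
  unfold qf
  rw [Real.log_div (Real.exp_ne_zero _) (Mg_pos hM β).ne', Real.log_exp]

end Scalar

/-- convexity step for `t ↦ t log t` -/
lemma convex_step {s t : ℝ} (hs : 0 < s) (ht : 0 < t) :
    t * Real.log t + (1 + Real.log t) * (s - t) ≤ s * Real.log s := by
  have hd : Real.log t - Real.log s ≤ t / s - 1 := by
    rw [← Real.log_div ht.ne' hs.ne']
    exact Real.log_le_sub_one_of_pos (by positivity)
  have h2 : s * (Real.log t - Real.log s) ≤ s * (t / s - 1) :=
    mul_le_mul_of_nonneg_left hd hs.le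
  have h3 : s * (t / s - 1) = t - s := by field_simp
  have h4 : s * (Real.log t - Real.log s) ≤ t - s := h2.trans_eq h3
  nlinarith [h4]

lemma abs_phi_le {t : ℝ} (ht : 0 ≤ t) : |t * Real.log t| ≤ t ^ 2 + 1 := by
  rcases ht.eq_or_lt with h0 | h0
  · rw [← h0]; norm_num
  rcases le_total 1 t with h1 | h1
  · have hl : 0 ≤ Real.log t := Real.log_nonneg h1
    rw [abs_of_nonneg (mul_nonneg h0.le hl)]
    have := Real.log_le_sub_one_of_pos h0
    nlinarith
  · have hl : Real.log t ≤ 0 := Real.log_nonpos h0.le h1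
    rw [abs_of_nonpos (mul_nonpos_of_nonneg_of_nonpos h0.le hl)]
    have hinv : Real.log t⁻¹ ≤ t⁻¹ - 1 := Real.log_le_sub_one_of_pos (by positivity)
    have : -(t * Real.log t) = t * Real.log t⁻¹ := by rw [Real.log_inv]; ring
    rw [this]
    have h5 : t * Real.log t⁻¹ ≤ t * (t⁻¹ - 1) :=
      mul_le_mul_of_nonneg_left hinv h0.le
    have h6 : t * (t⁻¹ - 1) = 1 - t := by field_simp
    nlinarith

lemma zip_prod_nonneg {α : Type*} (g : α → α → ℝ) (h : ∀ a b, 0 ≤ g a b) :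
    ∀ l1 l2 : List α, 0 ≤ (List.zipWith g l1 l2).prod
  | [], _ => by simp
  | _ :: _, [] => by simp
  | a :: l1, b :: l2 => by
      rw [List.zipWith_cons_cons, List.prod_cons]
      exact mul_nonneg (h a b) (zip_prod_nonneg g h l1 l2)

lemma sumK_le_one {tr : ℕ} {K : ℕ → ℝ} (hKpos : ∀ m, 0 ≤ K m)
    (hKsupp : ∀ m, m = 0 ∨ tr < m → K m = 0)
    (hKsum : ∑ m ∈ Finset.Icc 1 tr, K m = 1) (m : ℕ) :
    ∑ j ∈ Finset.range m, K j ≤ 1 := by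
  have h1 : ∑ j ∈ Finset.range m, K j ≤ ∑ j ∈ Finset.range (m + tr + 1), K j :=
    Finset.sum_le_sum_of_subset_of_nonneg
      (Finset.range_subset_range.2 (by omega)) (fun i _ _ => hKpos i)
  have h2 : ∑ j ∈ Finset.range (m + tr + 1), K j = ∑ j ∈ Finset.Icc 1 tr, K j := by
    refine (Finset.sum_subset (fun i hi => ?_) (fun i hi hni => ?_)).symm
    · simp only [Finset.mem_Icc] at hi
      simp only [Finset.mem_range]
      omega
    · apply hKsupp
      simp only [Finset.mem_Icc] at hni
      omega
  rw [h2, hKsum] at h1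
  exact h1

/-- 1D domination predicate -/
def Dom1 (f : ℝ → ℝ) : Prop := ∃ C a : ℝ, 0 ≤ C ∧ 0 ≤ a ∧ ∀ y, |f y| ≤ C * Eb a y

namespace Dom1

variable {f g : ℝ → ℝ}

lemma mono (h : ∀ y, |f y| ≤ g y) (hg : Dom1 g) : Dom1 f := by
  obtain ⟨C, a, hC, ha, hb⟩ := hg
  exact ⟨C, a, hC, ha, fun y => le_trans (h y) (le_trans (le_abs_self _) (hb y))⟩

lemma const (c : ℝ) : Dom1 (fun _ => c) :=
  ⟨|c|, 0, abs_nonneg c, le_refl _,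
    fun y => le_mul_of_one_le_right (abs_nonneg c) (one_le_Eb 0 y)⟩

lemma add (hf : Dom1 f) (hg : Dom1 g) : Dom1 (fun y => f y + g y) := by
  obtain ⟨C, a, hC, ha, hb⟩ := hf
  obtain ⟨C', a', hC', ha', hb'⟩ := hg
  refine ⟨2 * (C + C'), a + a', by positivity, by linarith, fun y => ?_⟩
  have h2 := Eb_le ha (by linarith : a ≤ a + a') y
  have h3 := Eb_le ha' (by linarith : a' ≤ a + a') y
  have := abs_add_le (f y) (g y)
  nlinarith [hb y, hb' y, mul_le_mul_of_nonneg_left h2 hC, mul_le_mul_of_nonneg_left h3 hC']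

lemma neg (hf : Dom1 f) : Dom1 (fun y => -f y) := by
  obtain ⟨C, a, hC, ha, hb⟩ := hf
  exact ⟨C, a, hC, ha, fun y => by rw [abs_neg]; exact hb y⟩

lemma sub (hf : Dom1 f) (hg : Dom1 g) : Dom1 (fun y => f y - g y) := by
  simpa [sub_eq_add_neg] using hf.add hg.neg

lemma mul (hf : Dom1 f) (hg : Dom1 g) : Dom1 (fun y => f y * g y) := by
  obtain ⟨C, a, hC, ha, hb⟩ := hf
  obtain ⟨C', a', hC', ha', hb'⟩ := hg
  refine ⟨4 * (C * C'), a + a', by positivity, by linarith, fun y => ?_⟩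
  have h1 : |f y * g y| ≤ (C * Eb a y) * (C' * Eb a' y) := by
    rw [abs_mul]
    exact mul_le_mul (hb y) (hb' y) (abs_nonneg _) (mul_nonneg hC (Eb_pos a y).le)
  have h2 := Eb_mul_Eb ha ha' y
  nlinarith [mul_nonneg hC hC', (Eb_pos (a + a') y).le]

lemma expf (β : ℝ) : Dom1 (fun y => Real.exp (β * y)) :=
  ⟨1, |β|, zero_le_one, abs_nonneg β, fun y => by
    rw [abs_of_pos (Real.exp_pos _), one_mul]
    exact exp_le_Eb (le_refl _) y⟩

lemma absf : Dom1 (fun y => |y|) := by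
  refine ⟨1, 1, zero_le_one, zero_le_one, fun y => ?_⟩
  rw [abs_abs, one_mul]
  unfold Eb
  rcases le_total 0 y with h | h
  · rw [abs_of_nonneg h]
    have : y ≤ Real.exp (1 * y) := by rw [one_mul]; linarith [Real.add_one_le_exp y]
    linarith [(Real.exp_pos (-(1 * y))).le]
  · rw [abs_of_nonpos h]
    have : -y ≤ Real.exp (-(1 * y)) := by rw [one_mul]; linarith [Real.add_one_le_exp (-y)]
    linarith [(Real.exp_pos (1 * y)).le]

lemma qff {μ : Measure ℝ} [IsProbabilityMeasure μ]
    (hM : ∀ lam : ℝ, Integrable (fun x => Real.exp (lam * x)) μ) (β : ℝ) :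
    Dom1 (fun y => qf μ β y) := by
  have : (fun y => qf μ β y) = fun y => Real.exp (β * y) * (Mg μ β)⁻¹ := by
    funext y; unfold qf; ring
  rw [this]
  exact (expf β).mul (const _)

lemma integrable {μ : Measure ℝ}
    (hM : ∀ lam : ℝ, Integrable (fun x => Real.exp (lam * x)) μ)
    (hf : Dom1 f) (hmeas : AEStronglyMeasurable f μ) : Integrable f μ := by
  obtain ⟨C, a, hC, ha, hb⟩ := hf
  refine Integrable.mono' ((integrable_Eb hM a).const_mul C) hmeas (ae_of_all _ fun y => ?_)
  simpa using hb y

end Dom1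

/-- The 1D correlation/stochastic-dominance inequality. -/
lemma oneD (μ : Measure ℝ) [IsProbabilityMeasure μ]
    (hM : ∀ lam : ℝ, Integrable (fun x => Real.exp (lam * x)) μ)
    {β γ : ℝ} (hβ : 0 ≤ β) (hβγ : β ≤ γ) {AA BB : ℝ} (hA : 0 ≤ AA) (hB : 0 ≤ BB) :
    0 ≤ ∫ y, Real.log (AA + BB * qf μ β y) * (BB * (qf μ γ y - qf μ β y)) ∂μ := by
  rcases hB.eq_or_lt with hB0 | hB0
  · simp [← hB0]
  rcases hβγ.eq_or_lt with hbg0 | hbg0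
  · simp [← hbg0]
  -- main case
  have hMβ := Mg_pos hM β
  have hMγ := Mg_pos hM γ
  have hqβ := fun y => qf_pos hM β y
  have hqγ := fun y => qf_pos hM γ y
  have hargpos : ∀ y, 0 < AA + BB * qf μ β y := fun y => by nlinarith [hqβ y]
  have hne : γ - β ≠ 0 := sub_ne_zero.2 hbg0.ne'
  set y₀ : ℝ := (Real.log (Mg μ γ) - Real.log (Mg μ β)) / (γ - β) with hy₀def
  have hy₀ : (γ - β) * y₀ = Real.log (Mg μ γ) - Real.log (Mg μ β) := by
    rw [hy₀def]; field_simp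
  -- sign facts
  have hqmono : ∀ {y z : ℝ}, y ≤ z → qf μ β y ≤ qf μ β z := by
    intro y z h
    unfold qf
    gcongr
  have hcross : ∀ y, y₀ ≤ y → qf μ β y ≤ qf μ γ y := by
    intro y h
    unfold qf
    rw [div_le_div_iff₀ hMβ hMγ]
    calc Real.exp (β * y) * Mg μ γ = Real.exp (β * y + Real.log (Mg μ γ)) := by
          rw [Real.exp_add, Real.exp_log hMγ]
      _ ≤ Real.exp (γ * y + Real.log (Mg μ β)) := by
          apply Real.exp_le_exp.2
          nlinarith [mul_le_mul_of_nonneg_left h (le_of_lt (sub_pos.2 hbg0))]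
      _ = Real.exp (γ * y) * Mg μ β := by rw [Real.exp_add, Real.exp_log hMβ]
  have hcross' : ∀ y, y ≤ y₀ → qf μ γ y ≤ qf μ β y := by
    intro y h
    unfold qf
    rw [div_le_div_iff₀ hMγ hMβ]
    calc Real.exp (γ * y) * Mg μ β = Real.exp (γ * y + Real.log (Mg μ β)) := by
          rw [Real.exp_add, Real.exp_log hMβ]
      _ ≤ Real.exp (β * y + Real.log (Mg μ γ)) := by
          apply Real.exp_le_exp.2
          nlinarith [mul_le_mul_of_nonneg_left h (le_of_lt (sub_pos.2 hbg0))]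
      _ = Real.exp (β * y) * Mg μ γ := by rw [Real.exp_add, Real.exp_log hMγ]
  have sign : ∀ y, 0 ≤ (Real.log (AA + BB * qf μ β y) - Real.log (AA + BB * qf μ β y₀))
      * (BB * (qf μ γ y - qf μ β y)) := by
    intro y
    rcases le_total y₀ y with h | h
    · apply mul_nonneg
      · rw [sub_nonneg]
        apply Real.log_le_log (hargpos y₀)
        nlinarith [hqmono h]
      · have := hcross y h
        nlinarith
    · have h1 : Real.log (AA + BB * qf μ β y) - Real.log (AA + BB * qf μ β y₀) ≤ 0 := by
        rw [sub_nonpos]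
        apply Real.log_le_log (hargpos y)
        nlinarith [hqmono h]
      have h2 : BB * (qf μ γ y - qf μ β y) ≤ 0 := by
        have := hcross' y h
        nlinarith
      nlinarith
  -- integrability
  have hD_int : Integrable (fun y => BB * (qf μ γ y - qf μ β y)) μ :=
    (((qf_integrable hM γ).sub (qf_integrable hM β)).const_mul BB)
  have hlog_dom : Dom1 (fun y => Real.log (AA + BB * qf μ β y)) := by
    apply Dom1.mono (g := fun y =>
      (AA + BB * qf μ β y) + (|Real.log BB| + |β| * |y| + |Real.log (Mg μ β)|))
    · intro y
      rw [abs_le]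
      constructor
      · have hlow : Real.log (BB * qf μ β y) ≤ Real.log (AA + BB * qf μ β y) :=
          Real.log_le_log (mul_pos hB0 (hqβ y)) (by nlinarith [hqβ y])
        rw [Real.log_mul hB0.ne' (hqβ y).ne', log_qf hM] at hlow
        have h1 : -|Real.log BB| ≤ Real.log BB := neg_abs_le _
        have h2 : -(|β| * |y|) ≤ β * y := by
          have := abs_mul β y
          nlinarith [neg_abs_le (β * y), abs_mul β y]
        have h3 : -|Real.log (Mg μ β)| ≤ -Real.log (Mg μ β) := by
          simp [neg_le_neg_iff]
          exact le_abs_self _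
        nlinarith [(hargpos y).le]
      · have hup : Real.log (AA + BB * qf μ β y) ≤ AA + BB * qf μ β y - 1 :=
          Real.log_le_sub_one_of_pos (hargpos y)
        have := abs_nonneg (Real.log BB)
        have := abs_nonneg (Real.log (Mg μ β))
        have : (0:ℝ) ≤ |β| * |y| := by positivity
        linarith
    · exact ((Dom1.const AA).add ((Dom1.const BB).mul (Dom1.qff hM β))).add
        (((Dom1.const _).add ((Dom1.const |β|).mul Dom1.absf)).add (Dom1.const _))
  have hD_dom : Dom1 (fun y => BB * (qf μ γ y - qf μ β y)) :=
    (Dom1.const BB).mul ((Dom1.qff hM γ).sub (Dom1.qff hM β))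
  have hprod_dom : Dom1 (fun y => Real.log (AA + BB * qf μ β y)
      * (BB * (qf μ γ y - qf μ β y))) := hlog_dom.mul hD_dom
  have hcont : Continuous (fun y => Real.log (AA + BB * qf μ β y)
      * (BB * (qf μ γ y - qf μ β y))) := by
    have h1 : Continuous fun y : ℝ => AA + BB * qf μ β y :=
      continuous_const.add (continuous_const.mul (qf_continuous β))
    exact (h1.log (fun y => (hargpos y).ne')).mul
      (continuous_const.mul ((qf_continuous γ).sub (qf_continuous β)))
  have hint : Integrable (fun y => Real.log (AA + BB * qf μ β y)
      * (BB * (qf μ γ y - qf μ β y))) μ :=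
    hprod_dom.integrable hM hcont.aestronglyMeasurable
  have hint2 : Integrable (fun y => Real.log (AA + BB * qf μ β y₀)
      * (BB * (qf μ γ y - qf μ β y))) μ := hD_int.const_mul _
  have key : 0 ≤ ∫ y, (Real.log (AA + BB * qf μ β y) - Real.log (AA + BB * qf μ β y₀))
      * (BB * (qf μ γ y - qf μ β y)) ∂μ := integral_nonneg sign
  have heq : (fun y => (Real.log (AA + BB * qf μ β y) - Real.log (AA + BB * qf μ β y₀))
      * (BB * (qf μ γ y - qf μ β y)))
      = fun y => Real.log (AA + BB * qf μ β y) * (BB * (qf μ γ y - qf μ β y))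
        - Real.log (AA + BB * qf μ β y₀) * (BB * (qf μ γ y - qf μ β y)) := by
    funext y; ring
  rw [heq, integral_sub hint hint2] at key
  have hzero : ∫ y, Real.log (AA + BB * qf μ β y₀) * (BB * (qf μ γ y - qf μ β y)) ∂μ = 0 := by
    rw [integral_const_mul]
    have : ∫ y, BB * (qf μ γ y - qf μ β y) ∂μ = 0 := by
      rw [integral_const_mul, integral_sub (qf_integrable hM γ) (qf_integrable hM β),
        qf_integral_one hM, qf_integral_one hM]
      ring
    rw [this]; ring
  rw [hzero, sub_zero] at key
  exact key


/-- The probability that the renewal set of a renewal process with return-time law `K`,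
observed on the time window `{0,…,n}` (and containing the initial renewal `0`), equals the
finite set `F`: the product of `K` over the consecutive gaps of `F`, times the probability
that no further renewal occurs before time `n`. -/
noncomputable def renewalWeight (K : ℕ → ℝ) (n : ℕ) (F : Finset (Fin (n + 1))) : ℝ :=
  if (0 : Fin (n + 1)) ∈ F then
    (let l := F.sort (· ≤ ·)
     (List.zipWith (fun a b : Fin (n + 1) => K (b.val - a.val)) l l.tail).prod *
       (1 - ∑ j ∈ Finset.range (n + 1 - ((l.map Fin.val).getLastD 0)), K j))
  else 0

/-- `k(β̄, x̄) = E_{K^{tr}}[ ∏_{k ∈ J_n} e^{β_k x_k}/M(β_k) ]`, the expectation over the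
renewal set `J_n = {0 ≤ k ≤ n : S_k = 0}` (with `0 ∈ J_n`). -/
noncomputable def kfun (K : ℕ → ℝ) (μ₀ : Measure ℝ) (n : ℕ)
    (b x : Fin (n + 1) → ℝ) : ℝ :=
  ∑ F ∈ (Finset.univ : Finset (Finset (Fin (n + 1)))),
    renewalWeight K n F *
      ∏ k ∈ F, Real.exp (b k * x k) / ∫ y, Real.exp (b k * y) ∂μ₀

lemma renewalWeight_nonneg {K : ℕ → ℝ} {tr : ℕ} (hKpos : ∀ m, 0 ≤ K m)
    (hKsupp : ∀ m, m = 0 ∨ tr < m → K m = 0)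
    (hKsum : ∑ m ∈ Finset.Icc 1 tr, K m = 1) (n : ℕ) (F : Finset (Fin (n + 1))) :
    0 ≤ renewalWeight K n F := by
  unfold renewalWeight
  split_ifs with h
  · refine mul_nonneg ?_ ?_
    · exact zip_prod_nonneg _ (fun a b => hKpos _) _ _
    · rw [sub_nonneg]
      exact sumK_le_one hKpos hKsupp hKsum _
  · exact le_rfl

lemma kfun_eq (K : ℕ → ℝ) (μ₀ : Measure ℝ) (n : ℕ) (d x : Fin (n + 1) → ℝ) :
    kfun K μ₀ n d x
      = ∑ F ∈ (Finset.univ : Finset (Finset (Fin (n + 1)))),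
          renewalWeight K n F * ∏ k ∈ F, qf μ₀ (d k) (x k) := rfl

theorem stmt19 (μ₀ : Measure ℝ) [IsProbabilityMeasure μ₀]
    (hmean : ∫ x, x ∂μ₀ = 0)
    (hM : ∀ lam : ℝ, Integrable (fun x => Real.exp (lam * x)) μ₀)
    (tr : ℕ) (htr : 1 ≤ tr) (K : ℕ → ℝ) (hKpos : ∀ m, 0 ≤ K m)
    (hKsupp : ∀ m, m = 0 ∨ tr < m → K m = 0)
    (hKsum : ∑ m ∈ Finset.Icc 1 tr, K m = 1)
    (n : ℕ) (j : Fin (n + 1)) (b c : Fin (n + 1) → ℝ)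
    (hb : ∀ i, 0 ≤ b i) (hc : ∀ i, 0 ≤ c i)
    (hbc : b j ≤ c j) (hoff : ∀ i, i ≠ j → b i = c i) :
    ∫ x, kfun K μ₀ n b x * Real.log (kfun K μ₀ n b x)
        ∂(Measure.pi fun _ : Fin (n + 1) => μ₀)
      ≤ ∫ x, kfun K μ₀ n c x * Real.log (kfun K μ₀ n c x)
        ∂(Measure.pi fun _ : Fin (n + 1) => μ₀) := by
  classical
  by_cases hall : ∀ F : Finset (Fin (n + 1)), renewalWeight K n F = 0
  · have hz : ∀ (d : Fin (n + 1) → ℝ) x, kfun K μ₀ n d x = 0 := by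
      intro d x
      rw [kfun_eq]
      simp [hall]
    simp [hz]
  push_neg at hall
  obtain ⟨F0, hF0⟩ := hall
  have hw := renewalWeight_nonneg hKpos hKsupp hKsum n
  have hw0 : 0 < renewalWeight K n F0 := (hw F0).lt_of_ne (Ne.symm hF0)
  set Pi1 : Measure (Fin (n + 1) → ℝ) := Measure.pi fun _ : Fin (n + 1) => μ₀ with hPi1
  set kb : (Fin (n + 1) → ℝ) → ℝ := fun x => kfun K μ₀ n b x with hkb_def
  set kc : (Fin (n + 1) → ℝ) → ℝ := fun x => kfun K μ₀ n c x with hkc_def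
  -- positivity
  have hterm_nonneg : ∀ (d : Fin (n + 1) → ℝ) (x : Fin (n + 1) → ℝ)
      (F : Finset (Fin (n + 1))),
      0 ≤ renewalWeight K n F * ∏ k ∈ F, qf μ₀ (d k) (x k) := fun d x F =>
    mul_nonneg (hw F) (Finset.prod_nonneg fun k _ => (qf_pos hM _ _).le)
  have hlower : ∀ (d : Fin (n + 1) → ℝ) (x : Fin (n + 1) → ℝ),
      renewalWeight K n F0 * ∏ k ∈ F0, qf μ₀ (d k) (x k) ≤ kfun K μ₀ n d x := by
    intro d x
    rw [kfun_eq]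
    exact Finset.single_le_sum
      (f := fun F => renewalWeight K n F * ∏ k ∈ F, qf μ₀ (d k) (x k))
      (fun F _ => hterm_nonneg d x F) (Finset.mem_univ F0)
  have hpos : ∀ (d : Fin (n + 1) → ℝ) (x : Fin (n + 1) → ℝ), 0 < kfun K μ₀ n d x := by
    intro d x
    refine lt_of_lt_of_le ?_ (hlower d x)
    exact mul_pos hw0 (Finset.prod_pos fun k _ => qf_pos hM _ _)
  have hkb_pos : ∀ x, 0 < kb x := fun x => hpos b x
  have hkc_pos : ∀ x, 0 < kc x := fun x => hpos c x
  -- continuity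
  have hcont : ∀ d : Fin (n + 1) → ℝ, Continuous (fun x => kfun K μ₀ n d x) := by
    intro d
    simp only [kfun_eq]
    apply continuous_finset_sum
    intro F _
    exact continuous_const.mul (continuous_finset_prod F fun k _ =>
      (qf_continuous (d k)).comp (continuous_apply k))
  -- domination
  have hdom : ∀ d : Fin (n + 1) → ℝ, Dom (n + 1) (fun x => kfun K μ₀ n d x) := by
    intro d
    simp only [kfun_eq]
    apply Dom.sum
    intro F _
    refine (Dom.const _).mul (Dom.finprod F _ fun k _ => ?_)
    have : (fun x : Fin (n + 1) → ℝ => qf μ₀ (d k) (x k))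
        = fun x => Real.exp (d k * x k) * (Mg μ₀ (d k))⁻¹ := by
      funext x; rw [qf, div_eq_mul_inv]
    rw [this]
    exact (Dom.exp_coord k (d k)).mul (Dom.const _)
  have hdom_b := hdom b
  have hdom_c := hdom c
  rw [show (fun x => kfun K μ₀ n b x) = kb from rfl] at hdom_b
  rw [show (fun x => kfun K μ₀ n c x) = kc from rfl] at hdom_c
  -- log bound
  have hlog_bound : ∀ x, |Real.log (kb x)| ≤ kb x + (|Real.log (renewalWeight K n F0)|
      + ∑ k ∈ F0, (|b k| * |x k| + |Real.log (Mg μ₀ (b k))|)) := by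
    intro x
    have hrest : 0 ≤ |Real.log (renewalWeight K n F0)|
        + ∑ k ∈ F0, (|b k| * |x k| + |Real.log (Mg μ₀ (b k))|) := by
      apply add_nonneg (abs_nonneg _)
      apply Finset.sum_nonneg
      intro k _
      positivity
    rw [abs_le]
    constructor
    · have h1 : Real.log (renewalWeight K n F0 * ∏ k ∈ F0, qf μ₀ (b k) (x k))
          ≤ Real.log (kb x) :=
        Real.log_le_log (mul_pos hw0 (Finset.prod_pos fun k _ => qf_pos hM _ _)) (hlower b x)
      have h2 : Real.log (renewalWeight K n F0 * ∏ k ∈ F0, qf μ₀ (b k) (x k))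
          = Real.log (renewalWeight K n F0) + ∑ k ∈ F0, (b k * x k - Real.log (Mg μ₀ (b k))) := by
        rw [Real.log_mul hw0.ne' (Finset.prod_pos fun k _ => qf_pos hM _ _).ne',
          Real.log_prod (fun k _ => (qf_pos hM _ _).ne')]
        congr 1
        exact Finset.sum_congr rfl fun k _ => log_qf hM _ _
      have h3 : -(|Real.log (renewalWeight K n F0)|
            + ∑ k ∈ F0, (|b k| * |x k| + |Real.log (Mg μ₀ (b k))|))
          ≤ Real.log (renewalWeight K n F0)
            + ∑ k ∈ F0, (b k * x k - Real.log (Mg μ₀ (b k))) := by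
        have hs : -(∑ k ∈ F0, (|b k| * |x k| + |Real.log (Mg μ₀ (b k))|))
            ≤ ∑ k ∈ F0, (b k * x k - Real.log (Mg μ₀ (b k))) := by
          rw [← Finset.sum_neg_distrib]
          apply Finset.sum_le_sum
          intro k _
          have e1 : |b k * x k| = |b k| * |x k| := abs_mul _ _
          have e2 := neg_abs_le (b k * x k)
          have e3 := le_abs_self (Real.log (Mg μ₀ (b k)))
          linarith
        linarith [neg_abs_le (Real.log (renewalWeight K n F0))]
      linarith [(hkb_pos x).le, h2 ▸ h1, h3]
    · have := Real.log_le_sub_one_of_pos (hkb_pos x)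
      linarith
  have hdom_logb : Dom (n + 1) (fun x => Real.log (kb x)) := by
    apply Dom.mono hlog_bound
    refine hdom_b.add ((Dom.const _).add (Dom.sum F0 _ fun k _ => ?_))
    exact ((Dom.const |b k|).mul (Dom.abs_coord k)).add (Dom.const _)
  -- integrability
  have hmeas_b : AEStronglyMeasurable kb Pi1 := (hcont b).aestronglyMeasurable
  have hmeas_c : AEStronglyMeasurable kc Pi1 := (hcont c).aestronglyMeasurable
  have hIb : Integrable kb Pi1 := hdom_b.integrable hM hmeas_b
  have hIc : Integrable kc Pi1 := hdom_c.integrable hM hmeas_c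
  have hlogb_cont : Continuous (fun x => Real.log (kb x)) :=
    (hcont b).log fun x => (hkb_pos x).ne'
  have hlogc_cont : Continuous (fun x => Real.log (kc x)) :=
    (hcont c).log fun x => (hkc_pos x).ne'
  have hIφb : Integrable (fun x => kb x * Real.log (kb x)) Pi1 := by
    refine Dom.integrable hM ?_ (((hcont b).mul hlogb_cont).aestronglyMeasurable)
    apply Dom.mono (g := fun x => kb x * kb x + 1)
    · intro x
      have := abs_phi_le (hkb_pos x).le
      calc |kb x * Real.log (kb x)| ≤ kb x ^ 2 + 1 := this
        _ = kb x * kb x + 1 := by ring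
    · exact (hdom_b.mul hdom_b).add (Dom.const 1)
  have hIφc : Integrable (fun x => kc x * Real.log (kc x)) Pi1 := by
    refine Dom.integrable hM ?_ (((hcont c).mul hlogc_cont).aestronglyMeasurable)
    apply Dom.mono (g := fun x => kc x * kc x + 1)
    · intro x
      have := abs_phi_le (hkc_pos x).le
      calc |kc x * Real.log (kc x)| ≤ kc x ^ 2 + 1 := this
        _ = kc x * kc x + 1 := by ring
    · exact (hdom_c.mul hdom_c).add (Dom.const 1)
  have hI3 : Integrable (fun x => Real.log (kb x) * (kc x - kb x)) Pi1 := by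
    refine Dom.integrable hM (hdom_logb.mul (hdom_c.sub hdom_b))
      ((hlogb_cont.mul ((hcont c).sub (hcont b))).aestronglyMeasurable)
  have hIcb : Integrable (fun x => kc x - kb x) Pi1 := hIc.sub hIb
  have hI2 : Integrable (fun x => (1 + Real.log (kb x)) * (kc x - kb x)) Pi1 := by
    have : (fun x => (1 + Real.log (kb x)) * (kc x - kb x))
        = fun x => (kc x - kb x) + Real.log (kb x) * (kc x - kb x) := by
      funext x; ring
    rw [this]
    exact hIcb.add hI3
  -- equal total mass
  have hmass : ∀ d : Fin (n + 1) → ℝ,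
      ∫ x, kfun K μ₀ n d x ∂Pi1 = ∑ F ∈ (Finset.univ : Finset (Finset (Fin (n + 1)))),
        renewalWeight K n F := by
    intro d
    have hterm : ∀ (F : Finset (Fin (n + 1))) (x : Fin (n + 1) → ℝ),
        ∏ k ∈ F, qf μ₀ (d k) (x k) = ∏ i, (if i ∈ F then qf μ₀ (d i) (x i) else 1) := by
      intro F x
      rw [Finset.prod_ite_mem Finset.univ F (fun i => qf μ₀ (d i) (x i)), Finset.univ_inter]
    have hint_f : ∀ (F : Finset (Fin (n + 1))) (i : Fin (n + 1)),
        Integrable (fun u => if i ∈ F then qf μ₀ (d i) u else 1) μ₀ := by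
      intro F i
      split_ifs
      · exact qf_integrable hM _
      · exact integrable_const 1
    have e1 : ∀ F : Finset (Fin (n + 1)),
        (fun x : Fin (n + 1) → ℝ => renewalWeight K n F * ∏ k ∈ F, qf μ₀ (d k) (x k))
        = fun x => renewalWeight K n F * ∏ i, (if i ∈ F then qf μ₀ (d i) (x i) else 1) := by
      intro F
      funext x
      rw [hterm]
    have hIntTerm : ∀ F : Finset (Fin (n + 1)),
        Integrable (fun x : Fin (n + 1) → ℝ =>
          renewalWeight K n F * ∏ k ∈ F, qf μ₀ (d k) (x k)) Pi1 := by
      intro F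
      rw [e1 F, hPi1]
      exact (integrable_pi_prod
        (f := fun i u => if i ∈ F then qf μ₀ (d i) u else 1)
        (fun i => hint_f F i)).const_mul _
    simp only [kfun_eq]
    rw [integral_finset_sum _ fun F _ => hIntTerm F]
    apply Finset.sum_congr rfl
    intro F _
    rw [e1 F, integral_const_mul, hPi1,
      integral_pi_prod (f := fun i u => if i ∈ F then qf μ₀ (d i) u else 1)]
    have h1 : ∀ i : Fin (n + 1), (∫ u, (if i ∈ F then qf μ₀ (d i) u else 1) ∂μ₀) = 1 := by
      intro i
      split_ifs
      · exact qf_integral_one hM _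
      · simp
    rw [Finset.prod_congr rfl fun i _ => h1 i]
    simp
  have hmass_eq : ∫ x, kb x ∂Pi1 = ∫ x, kc x ∂Pi1 := by
    rw [hkb_def, hkc_def, hmass b, hmass c]
  -- convexity step
  have hptwise : ∀ x, kb x * Real.log (kb x) + (1 + Real.log (kb x)) * (kc x - kb x)
      ≤ kc x * Real.log (kc x) := fun x => convex_step (hkc_pos x) (hkb_pos x)
  have hmono : ∫ x, (kb x * Real.log (kb x) + (1 + Real.log (kb x)) * (kc x - kb x)) ∂Pi1
      ≤ ∫ x, kc x * Real.log (kc x) ∂Pi1 :=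
    integral_mono (hIφb.add hI2) hIφc hptwise
  rw [integral_add hIφb hI2] at hmono
  -- the correlation term
  have hcorr : 0 ≤ ∫ x, Real.log (kb x) * (kc x - kb x) ∂Pi1 := by
    set A : (Fin n → ℝ) → ℝ := fun x' =>
      ∑ F ∈ Finset.univ.filter (fun F : Finset (Fin (n + 1)) => j ∉ F),
        renewalWeight K n F * ∏ k ∈ F, qf μ₀ (b k) (Fin.insertNth (α := fun _ => ℝ) j (0 : ℝ) x' k) with hA_def
    set B : (Fin n → ℝ) → ℝ := fun x' =>
      ∑ F ∈ Finset.univ.filter (fun F : Finset (Fin (n + 1)) => j ∈ F),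
        renewalWeight K n F * ∏ k ∈ F.erase j, qf μ₀ (b k) (Fin.insertNth (α := fun _ => ℝ) j (0 : ℝ) x' k) with hB_def
    have hAnn : ∀ x', 0 ≤ A x' := fun x' => Finset.sum_nonneg fun F _ =>
      mul_nonneg (hw F) (Finset.prod_nonneg fun k _ => (qf_pos hM _ _).le)
    have hBnn : ∀ x', 0 ≤ B x' := fun x' => Finset.sum_nonneg fun F _ =>
      mul_nonneg (hw F) (Finset.prod_nonneg fun k _ => (qf_pos hM _ _).le)
    have hins : ∀ (y : ℝ) (x' : Fin n → ℝ) (k : Fin (n + 1)), k ≠ j →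
        Fin.insertNth (α := fun _ => ℝ) j y x' k = Fin.insertNth (α := fun _ => ℝ) j (0 : ℝ) x' k := by
      intro y x' k hk
      obtain ⟨i, rfl⟩ := Fin.exists_succAbove_eq hk
      rw [Fin.insertNth_apply_succAbove, Fin.insertNth_apply_succAbove]
    have hsplit : ∀ (d : Fin (n + 1) → ℝ), (∀ k, k ≠ j → d k = b k) →
        ∀ (y : ℝ) (x' : Fin n → ℝ),
        kfun K μ₀ n d (j.insertNth y x') = A x' + B x' * qf μ₀ (d j) y := by
      intro d hd y x'
      rw [kfun_eq, ← Finset.sum_filter_add_sum_filter_not Finset.univ (fun F => j ∈ F)]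
      have h1 : ∑ F ∈ Finset.univ.filter (fun F : Finset (Fin (n + 1)) => ¬ j ∈ F),
          renewalWeight K n F * ∏ k ∈ F, qf μ₀ (d k) (Fin.insertNth (α := fun _ => ℝ) j y x' k) = A x' := by
        rw [hA_def]
        apply Finset.sum_congr rfl
        intro F hF
        have hjF : j ∉ F := (Finset.mem_filter.1 hF).2
        congr 1
        apply Finset.prod_congr rfl
        intro k hk
        have hkj : k ≠ j := fun h => hjF (h ▸ hk)
        rw [hd k hkj, hins y x' k hkj]
      have h2 : ∑ F ∈ Finset.univ.filter (fun F : Finset (Fin (n + 1)) => j ∈ F),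
          renewalWeight K n F * ∏ k ∈ F, qf μ₀ (d k) (Fin.insertNth (α := fun _ => ℝ) j y x' k)
          = B x' * qf μ₀ (d j) y := by
        rw [hB_def, Finset.sum_mul]
        apply Finset.sum_congr rfl
        intro F hF
        have hjF : j ∈ F := (Finset.mem_filter.1 hF).2
        rw [← Finset.mul_prod_erase F _ hjF]
        have hfj : qf μ₀ (d j) (Fin.insertNth (α := fun _ => ℝ) j y x' j) = qf μ₀ (d j) y := by
          rw [Fin.insertNth_apply_same]
        have herase : ∏ k ∈ F.erase j, qf μ₀ (d k) (Fin.insertNth (α := fun _ => ℝ) j y x' k)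
            = ∏ k ∈ F.erase j, qf μ₀ (b k) (Fin.insertNth (α := fun _ => ℝ) j (0 : ℝ) x' k) := by
          apply Finset.prod_congr rfl
          intro k hk
          have hkj := Finset.ne_of_mem_erase hk
          rw [hd k hkj, hins y x' k hkj]
        rw [hfj, herase]
        ring
      rw [h1, h2]
      ring
    set e : (Fin (n + 1) → ℝ) ≃ᵐ ℝ × (Fin n → ℝ) :=
      MeasurableEquiv.piFinSuccAbove (fun _ : Fin (n + 1) => ℝ) j with he_def
    have mp : MeasurePreserving e Pi1
        (μ₀.prod (Measure.pi fun _ : Fin n => μ₀)) := by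
      rw [hPi1, he_def]
      exact measurePreserving_piFinSuccAbove (fun _ : Fin (n + 1) => μ₀) j
    have mps := MeasurePreserving.symm e mp
    have hesymm : ∀ z : ℝ × (Fin n → ℝ), e.symm z = j.insertNth z.1 z.2 := by
      intro z
      rw [he_def]
      simp [MeasurableEquiv.piFinSuccAbove_symm_apply, Fin.insertNthEquiv]
    have hFne : ∀ z : ℝ × (Fin n → ℝ),
        Real.log (kb (e.symm z)) * (kc (e.symm z) - kb (e.symm z))
        = Real.log (A z.2 + B z.2 * qf μ₀ (b j) z.1)
          * (B z.2 * (qf μ₀ (c j) z.1 - qf μ₀ (b j) z.1)) := by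
      intro z
      have hbz : kb (e.symm z) = A z.2 + B z.2 * qf μ₀ (b j) z.1 := by
        rw [hesymm z]
        exact hsplit b (fun k _ => rfl) z.1 z.2
      have hcz : kc (e.symm z) = A z.2 + B z.2 * qf μ₀ (c j) z.1 := by
        rw [hesymm z]
        exact hsplit c (fun k hk => (hoff k hk).symm) z.1 z.2
      rw [hbz, hcz]
      ring
    have htrans : ∫ x, Real.log (kb x) * (kc x - kb x) ∂Pi1
        = ∫ z : ℝ × (Fin n → ℝ), Real.log (kb (e.symm z)) * (kc (e.symm z) - kb (e.symm z))
            ∂(μ₀.prod (Measure.pi fun _ : Fin n => μ₀)) :=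
      (mps.integral_comp' (fun x => Real.log (kb x) * (kc x - kb x))).symm
    have hI3' : Integrable (fun z : ℝ × (Fin n → ℝ) =>
        Real.log (kb (e.symm z)) * (kc (e.symm z) - kb (e.symm z)))
        (μ₀.prod (Measure.pi fun _ : Fin n => μ₀)) :=
      (mps.integrable_comp_emb (MeasurableEquiv.measurableEmbedding _)).mpr hI3
    rw [htrans, integral_prod_symm _ hI3']
    apply integral_nonneg
    intro x'
    have hfun : (fun y => Real.log (kb (e.symm (y, x')))
        * (kc (e.symm (y, x')) - kb (e.symm (y, x'))))
        = fun y => Real.log (A x' + B x' * qf μ₀ (b j) y)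
          * (B x' * (qf μ₀ (c j) y - qf μ₀ (b j) y)) := by
      funext y
      exact hFne (y, x')
    show 0 ≤ ∫ y, Real.log (kb (e.symm (y, x')))
        * (kc (e.symm (y, x')) - kb (e.symm (y, x'))) ∂μ₀
    rw [hfun]
    exact oneD μ₀ hM (hb j) hbc (hAnn x') (hBnn x')
  have hsplit2 : ∫ x, (1 + Real.log (kb x)) * (kc x - kb x) ∂Pi1
      = (∫ x, (kc x - kb x) ∂Pi1) + ∫ x, Real.log (kb x) * (kc x - kb x) ∂Pi1 := by
    have : (fun x => (1 + Real.log (kb x)) * (kc x - kb x))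
        = fun x => (kc x - kb x) + Real.log (kb x) * (kc x - kb x) := by
      funext x; ring
    rw [this, integral_add hIcb hI3]
  have hzero : ∫ x, (kc x - kb x) ∂Pi1 = 0 := by
    rw [integral_sub hIc hIb, hmass_eq]
    ring
  rw [hsplit2, hzero, zero_add] at hmono
  have goal_eq_b : ∫ x, kfun K μ₀ n b x * Real.log (kfun K μ₀ n b x) ∂Pi1
      = ∫ x, kb x * Real.log (kb x) ∂Pi1 := rfl
  have goal_eq_c : ∫ x, kfun K μ₀ n c x * Real.log (kfun K μ₀ n c x) ∂Pi1
      = ∫ x, kc x * Real.log (kc x) ∂Pi1 := rfl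
  calc ∫ x, kfun K μ₀ n b x * Real.log (kfun K μ₀ n b x) ∂Pi1
      = ∫ x, kb x * Real.log (kb x) ∂Pi1 := goal_eq_b
    _ ≤ ∫ x, kc x * Real.log (kc x) ∂Pi1 := by linarith
    _ = ∫ x, kfun K μ₀ n c x * Real.log (kfun K μ₀ n c x) ∂Pi1 := goal_eq_c.symm
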